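/- Let r, h be nonzero real numbers and let v be a real number with |v| > √(|r·h|). Then the series u = Σ_{i=0}^∞ c_i r^{i+1} (−h)^i (1/(2v))^{2i+1} converges absolutely, and its sum u satisfies h·u² + 2·u·v = r. In particular, for each such v the pair (u, v) solves the equation r = hu² + 2uv arising from the condition ω²(p*η) = r(Θp*H)(p*η) on a fibration. -/

import Mathlib

theorem catalan_le_four_pow (n : ℕ) : catalan n ≤ 4 ^ n := by
  have h1 : catalan n ≤ n.centralBinom := by
    rw [catalan_eq_centralBinom_div]; exact Nat.div_le_self _ _
  have h2 : n.centralBinom ≤ 4 ^ n := by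
    have hs : (2 * n).choose n ≤ ∑ m ∈ Finset.range (2 * n + 1), (2 * n).choose m :=
      Finset.single_le_sum (fun _ _ => Nat.zero_le _) (Finset.mem_range.mpr (by omega))
    rw [Nat.sum_range_choose] at hs
    calc n.centralBinom = (2 * n).choose n := rfl
      _ ≤ 2 ^ (2 * n) := hs
      _ = 4 ^ n := by rw [pow_mul]; norm_num
  exact h1.trans h2

/-- For nonzero reals `r, h` and real `v` with `|v| > √|r·h|`, the
series `u = Σ_{i=0}^∞ c_i r^{i+1} (−h)^i (1/(2v))^{2i+1}` converges absolutely,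
and its sum `u` satisfies `h·u² + 2·u·v = r`. -/
theorem catalan_series_solves_fibration_equation (r h v : ℝ) (hr : r ≠ 0) (hh : h ≠ 0)
    (hv : Real.sqrt |r * h| < |v|) :
    Summable (fun i : ℕ =>
      |(catalan i : ℝ) * r ^ (i + 1) * (-h) ^ i * (1 / (2 * v)) ^ (2 * i + 1)|) ∧
    h * (∑' i : ℕ,
        (catalan i : ℝ) * r ^ (i + 1) * (-h) ^ i * (1 / (2 * v)) ^ (2 * i + 1)) ^ 2
      + 2 * (∑' i : ℕ,
        (catalan i : ℝ) * r ^ (i + 1) * (-h) ^ i * (1 / (2 * v)) ^ (2 * i + 1)) * v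
      = r := by
  set a : ℕ → ℝ := fun i => (catalan i : ℝ) * r ^ (i + 1) * (-h) ^ i * (1 / (2 * v)) ^ (2 * i + 1)
    with ha
  have hv0 : v ≠ 0 := by
    intro hv'
    rw [hv', abs_zero] at hv
    exact absurd hv (not_lt.mpr (Real.sqrt_nonneg _))
  have hav : |v| > 0 := abs_pos.mpr hv0
  have hrh : |r * h| < |v| ^ 2 := by
    nlinarith [Real.sq_sqrt (abs_nonneg (r * h)), Real.sqrt_nonneg (|r * h|)]
  -- summability
  have hq1 : |r| * |h| / |v| ^ 2 < 1 := by
    rw [div_lt_one (by positivity), ← abs_mul]; exact hrh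
  have hq0 : (0:ℝ) ≤ |r| * |h| / |v| ^ 2 := by positivity
  have hbound : ∀ i : ℕ, |a i| ≤ (|r| / (2 * |v|)) * (|r| * |h| / |v| ^ 2) ^ i := by
    intro i
    have h1 : |a i| = (catalan i : ℝ) * (|r| ^ (i+1) * |h| ^ i * (1 / (2 * |v|)) ^ (2*i+1)) := by
      rw [ha]
      rw [abs_mul, abs_mul, abs_mul, abs_pow, abs_pow, abs_pow, abs_neg, Nat.abs_cast]
      rw [abs_div, abs_one, abs_mul, abs_two]
      ring
    rw [h1]
    calc (catalan i : ℝ) * (|r| ^ (i+1) * |h| ^ i * (1 / (2 * |v|)) ^ (2*i+1))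
        ≤ (4:ℝ) ^ i * (|r| ^ (i+1) * |h| ^ i * (1 / (2 * |v|)) ^ (2*i+1)) := by
          gcongr
          exact_mod_cast catalan_le_four_pow i
      _ = (|r| / (2 * |v|)) * (|r| * |h| / |v| ^ 2) ^ i := by
          have key2 : ∀ w : ℝ, w ≠ 0 → (4:ℝ) ^ i * (|r| ^ (i+1) * |h| ^ i * (1 / (2 * w)) ^ (2*i+1))
              = |r| / (2 * w) * (|r| * |h| / w ^ 2) ^ i := by
            intro w hw
            rw [show ((4:ℝ)) = 2 ^ 2 from by norm_num, ← pow_mul]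
            field_simp
            have h2 : (1/2:ℝ)^(i*2) * 2^(i*2) = 1 := by rw [← mul_pow]; norm_num
            have h3 : w * w⁻¹ = 1 := mul_inv_cancel₀ hw
            linear_combination (|r| * |r| ^ i * |h| ^ i * w⁻¹ ^ (i * 2) * ((1/2:ℝ)^(i*2) * 2^(i*2))) * h3 + (|r| * |r| ^ i * |h| ^ i * w⁻¹ ^ (i * 2)) * h2
          exact key2 |v| (ne_of_gt hav)
  have hsum_abs : Summable (fun i => |a i|) :=
    Summable.of_nonneg_of_le (fun i => abs_nonneg _) hbound
      ((summable_geometric_of_lt_one hq0 hq1).mul_left _)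
  refine ⟨hsum_abs, ?_⟩
  have hsum : Summable a := hsum_abs.of_abs
  have hsum_norm : Summable (fun i => ‖a i‖) := by simpa [Real.norm_eq_abs] using hsum_abs
  -- Cauchy product
  have hprod : (∑' i, a i) * (∑' i, a i)
      = ∑' n, ∑ p ∈ Finset.HasAntidiagonal.antidiagonal n, a p.1 * a p.2 :=
    tsum_mul_tsum_eq_tsum_sum_antidiagonal_of_summable_norm hsum_norm hsum_norm
  have key : ∀ n : ℕ, h * (∑ p ∈ Finset.HasAntidiagonal.antidiagonal n, a p.1 * a p.2)
      = -((2 * v) * a (n + 1)) := by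
    intro n
    have h2 : (∑ p ∈ Finset.HasAntidiagonal.antidiagonal n, a p.1 * a p.2)
        = (catalan (n+1) : ℝ) * r ^ (n+2) * (-h) ^ n * (1 / (2 * v)) ^ (2*n+2) := by
      rw [catalan_succ']
      push_cast
      rw [Finset.sum_mul, Finset.sum_mul, Finset.sum_mul]
      apply Finset.sum_congr rfl
      rintro ⟨i, j⟩ hp
      have hij : i + j = n := Finset.HasAntidiagonal.mem_antidiagonal.mp hp
      subst hij
      simp only [ha]
      ring
    rw [h2, ha]
    simp only
    field_simp
    have h3 : v * v⁻¹ = 1 := mul_inv_cancel₀ hv0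
    linear_combination (-(h * h ^ n * ↑(catalan (n + 1)) * v⁻¹ ^ (n * 2) * (-1) ^ n * (1 / 2) ^ (n * 2) * (1 / 4) * v⁻¹ ^ 2)) * h3
  have hg : Summable (fun i => (2 * v) * a i) := hsum.mul_left _
  have hshift : (∑' i, (2 * v) * a i) = (2 * v) * a 0 + ∑' n, (2 * v) * a (n + 1) :=
    Summable.tsum_eq_zero_add hg
  have ha0 : (2 * v) * a 0 = r := by
    rw [ha]; simp only; field_simp
    rw [catalan_zero]; simp only [Nat.cast_one, mul_zero, zero_add, pow_one]; field_simp
  have hu2 : h * (∑' i, a i) ^ 2 = ∑' n, -((2 * v) * a (n + 1)) := by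
    rw [sq, hprod, ← tsum_mul_left]
    exact tsum_congr key
  have h2uv : 2 * (∑' i, a i) * v = ∑' i, (2 * v) * a i := by
    rw [tsum_mul_left]
    ring
  rw [hu2, h2uv, tsum_neg, hshift, ha0]
  ring
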